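/- Let m be a real number and let H, D, E : (0,1) → ℝ be functions such that H(r) > 0 and E(r) ≥ 0 for all r ∈ (0,1), H and D are differentiable on (0,1), and for every r ∈ (0,1): H'(r) = ((m−1)/r)·H(r) + 2·D(r), D'(r) = ((m−2)/r)·D(r) + 2·E(r), and D(r)² ≤ E(r)·H(r). Then the frequency function I(r) := r·D(r)/H(r) is nondecreasing on (0,1). -/

import Mathlib

/-- Abstract monotonicity of the boundary frequency function: if `H > 0`, `E ≥ 0`,
`H' = ((m-1)/r)H + 2D`, `D' = ((m-2)/r)D + 2E` and `D² ≤ E·H` on `(0,1)`, then the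
frequency `I(r) = r·D(r)/H(r)` is nondecreasing on `(0,1)`. -/
theorem frequency_monotone (m : ℝ) (H D E : ℝ → ℝ)
    (hH : ∀ r ∈ Set.Ioo (0 : ℝ) 1, 0 < H r)
    (hE : ∀ r ∈ Set.Ioo (0 : ℝ) 1, 0 ≤ E r)
    (hH' : ∀ r ∈ Set.Ioo (0 : ℝ) 1, HasDerivAt H ((m - 1) / r * H r + 2 * D r) r)
    (hD' : ∀ r ∈ Set.Ioo (0 : ℝ) 1, HasDerivAt D ((m - 2) / r * D r + 2 * E r) r)
    (hCS : ∀ r ∈ Set.Ioo (0 : ℝ) 1, (D r) ^ 2 ≤ E r * H r) :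
    MonotoneOn (fun r => r * D r / H r) (Set.Ioo 0 1) := by
  have key : ∀ r ∈ Set.Ioo (0 : ℝ) 1, HasDerivAt (fun r => r * D r / H r)
      (2 * r * (E r * H r - (D r) ^ 2) / (H r) ^ 2) r := by
    intro r hr
    have hne : r ≠ 0 := ne_of_gt hr.1
    have hHne : H r ≠ 0 := (hH r hr).ne'
    have h1 : HasDerivAt (fun y => y * D y)
        (1 * D r + r * ((m - 2) / r * D r + 2 * E r)) r :=
      (hasDerivAt_id r).mul (hD' r hr)
    have h2 := h1.div (hH' r hr) hHne
    refine h2.congr_deriv ?_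
    field_simp
    ring
  apply monotoneOn_of_deriv_nonneg (convex_Ioo 0 1)
  · exact fun r hr => ((key r hr).continuousAt).continuousWithinAt
  · rw [interior_Ioo]
    exact fun r hr => ((key r hr).differentiableAt).differentiableWithinAt
  · rw [interior_Ioo]
    intro r hr
    rw [(key r hr).deriv]
    have := hCS r hr
    apply div_nonneg _ (sq_nonneg _)
    have h2r : (0:ℝ) ≤ 2 * r := by linarith [hr.1]
    nlinarith [hCS r hr]
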